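/- Let α be a geodesic in a CAT(0) space X and x ∈ X. For any y ∈ α, the closest-point projection of y onto the geodesic [x, π_α(x)] equals π_α(x). -/
import Mathlib


open Metric Set

namespace Curtains

/-- A CAT(0) space: a metric space in which midpoints exist and the
Bruhat–Tits CN comparison inequality holds. -/
class CAT0 (X : Type*) [MetricSpace X] : Prop where
  midpoint : ∀ x y : X, ∃ m : X, dist x m = dist x y / 2 ∧ dist y m = dist x y / 2
  cn : ∀ x y z m : X, dist x m = dist x y / 2 → dist y m = dist x y / 2 →
    dist z m ^ 2 ≤ (dist z x ^ 2 + dist z y ^ 2) / 2 - dist x y ^ 2 / 4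

variable {X : Type*} [MetricSpace X]

/-- `γ` is a unit-speed geodesic on the set `I ⊆ ℝ`. -/
def IsGeodesicOn (γ : ℝ → X) (I : Set ℝ) : Prop :=
  ∀ s ∈ I, ∀ t ∈ I, dist (γ s) (γ t) = |s - t|

/-- `γ` parametrises the geodesic segment `[x,y]` by `[0, dist x y]`. -/
def IsGeoSeg (γ : ℝ → X) (x y : X) : Prop :=
  γ 0 = x ∧ γ (dist x y) = y ∧ IsGeodesicOn γ (Icc 0 (dist x y))

/-- The geodesic segment `[x,y]` as a subset of `X`. -/
def seg (γ : ℝ → X) (x y : X) : Set X := γ '' Icc 0 (dist x y)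

/-- A geodesic defined on an interval `I ⊆ ℝ`, together with a choice of
closest-point projection onto it. -/
structure Geodesic (X : Type*) [MetricSpace X] where
  I : Set ℝ
  ordConn : I.OrdConnected
  map : ℝ → X
  isom : IsGeodesicOn map I
  proj : X → ℝ
  proj_mem : ∀ x : X, proj x ∈ I
  proj_min : ∀ x : X, ∀ t ∈ I, dist x (map (proj x)) ≤ dist x (map t)

/-- A curtain: the preimage under the closest-point projection of a length-one
subsegment (the pole) not containing the endpoints of the geodesic. -/
structure Curtain (X : Type*) [MetricSpace X] where
  geo : Geodesic X
  r : ℝ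
  pole_in_interior : Icc (r - 1/2) (r + 1/2) ⊆ interior geo.I

namespace Curtain

variable (h : Curtain X)

/-- The curtain as a subset of `X`. -/
def carrier : Set X := {x | h.geo.proj x ∈ Icc (h.r - 1/2) (h.r + 1/2)}

/-- The negative halfspace `h⁻`. -/
def minus : Set X := {x | h.geo.proj x < h.r - 1/2}

/-- The positive halfspace `h⁺`. -/
def plus : Set X := {x | h.r + 1/2 < h.geo.proj x}

/-- The pole of the curtain. -/
def pole : Set X := h.geo.map '' Icc (h.r - 1/2) (h.r + 1/2)

/-- `h` is dual to the geodesic segment from `x` to `y` parametrised by `γ`. -/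
def DualToSeg (γ : ℝ → X) (x y : X) : Prop :=
  h.geo.I = Icc 0 (dist x y) ∧ ∀ t ∈ Icc (0:ℝ) (dist x y), h.geo.map t = γ t

/-- `h` separates the set `A` from the set `B`. -/
def SeparatesSets (A B : Set X) : Prop :=
  (A ⊆ h.minus ∧ B ⊆ h.plus) ∨ (A ⊆ h.plus ∧ B ⊆ h.minus)

/-- `h` separates the point `x` from the point `y`. -/
def SeparatesPts (x y : X) : Prop := h.SeparatesSets {x} {y}

end Curtain

/-- Two curtains meet if their carriers intersect. -/
def Meets (h k : Curtain X) : Prop := (h.carrier ∩ k.carrier).Nonempty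

/-- A (finite) chain of curtains: pairwise disjoint, and each member separates
its neighbours. -/
def IsChainSeq {n : ℕ} (c : Fin n → Curtain X) : Prop :=
  (∀ i j, i ≠ j → Disjoint (c i).carrier (c j).carrier) ∧
  (∀ i j k : Fin n, (i : ℕ) + 1 = j → (j : ℕ) + 1 = k →
    (c j).SeparatesSets (c i).carrier (c k).carrier)

/-- An infinite chain of curtains indexed by `ℕ`. -/
def IsChainSeqNat (c : ℕ → Curtain X) : Prop :=
  (∀ i j, i ≠ j → Disjoint (c i).carrier (c j).carrier) ∧
  (∀ i, (c (i+1)).SeparatesSets (c i).carrier (c (i+2)).carrier)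

/-- Two disjoint curtains are `L`-separated if every chain of curtains meeting
both has cardinality at most `L`. -/
def LSeparated (L : ℕ∞) (h h' : Curtain X) : Prop :=
  Disjoint h.carrier h'.carrier ∧
  ∀ (n : ℕ) (c : Fin n → Curtain X), IsChainSeq c →
    (∀ i, Meets (c i) h ∧ Meets (c i) h') → (n : ℕ∞) ≤ L

/-- Real-valued variant of `L`-separation. -/
def LSeparatedR (L : ℝ) (h h' : Curtain X) : Prop :=
  Disjoint h.carrier h'.carrier ∧
  ∀ (n : ℕ) (c : Fin n → Curtain X), IsChainSeq c →
    (∀ i, Meets (c i) h ∧ Meets (c i) h') → (n : ℝ) ≤ L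

/-- An `L`-chain: a chain whose members are pairwise `L`-separated. -/
def IsLChain (L : ℕ∞) {n : ℕ} (c : Fin n → Curtain X) : Prop :=
  IsChainSeq c ∧ ∀ i j, i ≠ j → LSeparated L (c i) (c j)

/-- An infinite `L`-chain indexed by `ℕ`. -/
def IsLChainNat (L : ℕ∞) (c : ℕ → Curtain X) : Prop :=
  IsChainSeqNat c ∧ ∀ i j, i ≠ j → LSeparated L (c i) (c j)

/-- A chain separates `x` from `y` if every member does. -/
def SeparatesChain {n : ℕ} (c : Fin n → Curtain X) (x y : X) : Prop :=
  ∀ i, (c i).SeparatesPts x y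

/-- The maximal cardinality of an `L`-chain separating `x` from `y`. -/
noncomputable def chainNum (L : ℕ∞) (x y : X) : ℕ :=
  sSup {m : ℕ | ∃ c : Fin m → Curtain X, IsLChain L c ∧ SeparatesChain c x y}

open Classical in
/-- The curtain metric `d_L`. -/
noncomputable def dL (L : ℕ∞) (x y : X) : ℝ :=
  if x = y then 0 else 1 + (chainNum L x y : ℝ)

/-- A geodesic is `D`-contracting if every ball disjoint from it projects to a
set of diameter at most `D`. -/
def Geodesic.Contracting (g : Geodesic X) (D : ℝ) : Prop :=
  ∀ (x : X) (ρ : ℝ), Disjoint (closedBall x ρ) (g.map '' g.I) →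
    Metric.diam (g.map '' (g.proj '' closedBall x ρ)) ≤ D


/-- for `y ∈ α`, the closest-point projection of `y` onto the
geodesic `[x, π_α x]` is `π_α x` (the unique closest point). -/
theorem stmt4 {X : Type*} [MetricSpace X] [CAT0 X] (g : Geodesic X)
    (x : X) (t : ℝ) (ht : t ∈ g.I)
    (γ : ℝ → X) (hγ : IsGeoSeg γ x (g.map (g.proj x))) :
    ∀ z ∈ seg γ x (g.map (g.proj x)),
      dist (g.map t) (g.map (g.proj x)) ≤ dist (g.map t) z ∧
      (z ≠ g.map (g.proj x) → dist (g.map t) (g.map (g.proj x)) < dist (g.map t) z) := by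
  obtain ⟨hγ0, hγd, hγgeo⟩ := hγ
  intro z hz
  obtain ⟨s, hs, hzs⟩ := hz
  set u0 := g.proj x with hu0
  set p := g.map u0 with hp
  set d := dist x p with hd
  have hu0I : u0 ∈ g.I := g.proj_mem x
  have hd0 : (0:ℝ) ≤ d := dist_nonneg
  have hxz : dist x z = s := by
    rw [← hγ0, ← hzs, hγgeo 0 ⟨le_refl 0, hd0⟩ s hs]
    rw [abs_of_nonpos (by linarith [hs.1])]; ring
  have hzp : dist z p = d - s := by
    rw [← hγd, ← hzs, hγgeo s hs d ⟨hd0, le_refl d⟩]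
    rw [abs_of_nonpos (by linarith [hs.2])]; ring
  -- p is the closest point of the geodesic to z
  have hmin : ∀ u ∈ g.I, dist z p ≤ dist z (g.map u) := by
    intro u hu
    have h1 : dist x p ≤ dist x (g.map u) := g.proj_min x u hu
    have h2 : dist x (g.map u) ≤ dist x z + dist z (g.map u) := dist_triangle _ _ _
    rw [hzp]; rw [hxz] at h2; linarith
  -- key inequality by dyadic induction
  have key : ∀ n : ℕ, ∀ u ∈ g.I,
      dist z p ^ 2 + (1 - (1/2:ℝ)^n) * (u - u0) ^ 2 ≤ dist z (g.map u) ^ 2 := by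
    intro n
    induction n with
    | zero =>
      intro u hu
      simp only [pow_zero, sub_self, zero_mul, add_zero]
      exact pow_le_pow_left₀ dist_nonneg (hmin u hu) 2
    | succ n ih =>
      intro u hu
      set m := (u0 + u) / 2 with hm
      have hmI : m ∈ g.I := by
        apply g.ordConn.uIcc_subset hu0I hu
        rcases le_total u0 u with h | h
        · rw [Set.uIcc_of_le h]; constructor <;> linarith
        · rw [Set.uIcc_of_ge h]; constructor <;> linarith
      have e0 : dist (g.map u0) (g.map u) = |u0 - u| := g.isom u0 hu0I u hu
      have e1 : dist (g.map u0) (g.map m) = dist (g.map u0) (g.map u) / 2 := by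
        rw [e0, g.isom u0 hu0I m hmI]
        have h1 : u0 - m = (u0 - u) / 2 := by rw [hm]; ring
        rw [h1, abs_div]; norm_num
      have e2 : dist (g.map u) (g.map m) = dist (g.map u0) (g.map u) / 2 := by
        rw [e0, g.isom u hu m hmI]
        have h1 : u - m = -((u0 - u) / 2) := by rw [hm]; ring
        rw [h1, abs_neg, abs_div]; norm_num
      have cn := CAT0.cn (g.map u0) (g.map u) z (g.map m) e1 e2
      have ihm := ih m hmI
      have hmq : (m - u0) ^ 2 = (u - u0) ^ 2 / 4 := by rw [hm]; ring
      have hq : dist (g.map u0) (g.map u) ^ 2 = (u - u0) ^ 2 := by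
        rw [e0, sq_abs]; ring
      rw [hmq] at ihm
      rw [hq, ← hp] at cn
      have hpow : ((1:ℝ)/2) ^ (n+1) = (1/2) ^ n * (1/2) := pow_succ _ _
      nlinarith [cn, ihm]
  -- pass to the limit
  have keyt : dist z p ^ 2 + (t - u0) ^ 2 ≤ dist z (g.map t) ^ 2 := by
    have hlim : Filter.Tendsto
        (fun n : ℕ => dist z p ^ 2 + (1 - (1/2:ℝ)^n) * (t - u0) ^ 2)
        Filter.atTop (nhds (dist z p ^ 2 + (1 - 0) * (t - u0) ^ 2)) := by
      apply Filter.Tendsto.add tendsto_const_nhds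
      apply Filter.Tendsto.mul _ tendsto_const_nhds
      exact (tendsto_pow_atTop_nhds_zero_of_lt_one (by norm_num) (by norm_num)).const_sub 1
    have := le_of_tendsto hlim (Filter.Eventually.of_forall (fun n => key n t ht))
    simpa using this
  have hpy : dist (g.map t) p = |t - u0| := by
    rw [hp, dist_comm, g.isom u0 hu0I t ht, abs_sub_comm]
  have hsq : dist (g.map t) p ^ 2 + dist z p ^ 2 ≤ dist (g.map t) z ^ 2 := by
    rw [hpy, sq_abs, dist_comm (g.map t) z]; linarith
  constructor
  · nlinarith [dist_nonneg (x := g.map t) (y := p), dist_nonneg (x := g.map t) (y := z),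
      dist_nonneg (x := z) (y := p), sq_nonneg (dist z p)]
  · intro hne
    have hzp0 : 0 < dist z p := dist_pos.mpr hne
    nlinarith [dist_nonneg (x := g.map t) (y := p), dist_nonneg (x := g.map t) (y := z)]


end Curtains
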